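/- For every formula φ of the product logic PTL_{P,Y}×K there exists a recursive TGNN T = (M, out) with M ∈ M̂ that captures φ, i.e., for every discrete pointed temporal graph (TG,(v,t_n)) coloured with the colours of φ: TG,(v,t_n) ⊨ φ if and only if T(TG,v) = 1. (In short, PTL_{P,Y}×K ≤ T_rec[M̂].) -/

import Mathlib

set_option maxHeartbeats 1000000

/-! ### Vectors -/

/-- Real vectors of dimension `d`. -/
abbrev Vec (d : ℕ) := Fin d → ℝ

/-- Cast a vector along an equality of dimensions. -/
def Vec.cast {m n : ℕ} (h : m = n) (x : Vec m) : Vec n := fun j => x (Fin.cast h.symm j)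

/-- Truncated ReLU. -/
noncomputable def trReLU (x : ℝ) : ℝ := max 0 (min 1 x)

/-- A single FNN layer: an affine map with rational weights followed by entrywise trReLU. -/
structure AffineLayer (m n : ℕ) where
  weight : Fin n → Fin m → ℚ
  bias : Fin n → ℚ

noncomputable def AffineLayer.eval {m n : ℕ} (l : AffineLayer m n) (x : Vec m) : Vec n :=
  fun j => trReLU ((∑ i, (l.weight j i : ℝ) * x i) + (l.bias j : ℝ))

/-- A feedforward neural network with trReLU activations,
of input dimension `m` and output dimension `n`. -/
structure FNN (m n : ℕ) where
  depth : ℕ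
  dims : ℕ → ℕ
  dim_in : dims 0 = m
  dim_out : dims depth = n
  layers : ∀ i : ℕ, AffineLayer (dims i) (dims (i + 1))

noncomputable def FNN.evalAux {m n : ℕ} (N : FNN m n) : (i : ℕ) → Vec (N.dims 0) → Vec (N.dims i)
  | 0, x => x
  | i + 1, x => (N.layers i).eval (N.evalAux i x)

noncomputable def FNN.eval {m n : ℕ} (N : FNN m n) (x : Vec m) : Vec n :=
  Vec.cast N.dim_out (N.evalAux N.depth (Vec.cast N.dim_in.symm x))

/-! ### Message-passing GNNs -/

/-- A general message-passing GNN: a finite sequence of layers, each consisting of an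
arbitrary multiset-aggregation function and an arbitrary combination function. -/
structure MPNN where
  depth : ℕ
  dims : ℕ → ℕ
  aggDims : ℕ → ℕ
  agg : ∀ i : ℕ, Multiset (Vec (dims i)) → Vec (aggDims i)
  comb : ∀ i : ℕ, Vec (dims i) → Vec (aggDims i) → Vec (dims (i + 1))

/-- Embeddings computed by an MPNN on a labelled graph (given by a symmetric boolean
adjacency function and a labelling `c`). -/
noncomputable def MPNN.emb (M : MPNN) {V : Type} [Fintype V] [DecidableEq V]
    (adj : V → V → Bool) (c : V → Vec (M.dims 0)) : (i : ℕ) → V → Vec (M.dims i)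
  | 0 => c
  | i + 1 => fun v =>
      M.comb i (M.emb adj c i v)
        (M.agg i ((Finset.univ.filter fun u => adj v u = true).val.map
          fun u => M.emb adj c i u))

/-- The final embedding `M(G,v)`. -/
noncomputable def MPNN.run (M : MPNN) {V : Type} [Fintype V] [DecidableEq V]
    (adj : V → V → Bool) (c : V → Vec (M.dims 0)) (v : V) : Vec (M.dims M.depth) :=
  M.emb adj c M.depth v

/-- Entrywise sum of a multiset of vectors. -/
noncomputable def sumAgg (d : ℕ) (S : Multiset (Vec d)) : Vec d :=
  fun j => (S.map fun x => x j).sum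

/-- The class `M̂`: MPNNs whose combination functions are realised by FNNs with trReLU
activations and whose aggregation is the entrywise sum of the multiset. -/
structure MPNNhat where
  depth : ℕ
  dims : ℕ → ℕ
  comb : ∀ i : ℕ, FNN (dims i + dims i) (dims (i + 1))

noncomputable def MPNNhat.toMPNN (M : MPNNhat) : MPNN where
  depth := M.depth
  dims := M.dims
  aggDims := M.dims
  agg := fun i => sumAgg (M.dims i)
  comb := fun i x y => (M.comb i).eval (Fin.append x y)

/-! ### Discrete temporal graphs -/

/-- A discrete temporal graph over vertex set `V` with `k` colours: a sequence of `len`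
snapshots (indexed `0, …, len - 1`, the timestamp of index `i` being `i + 1`), each with a
symmetric set of undirected edges and a `{0,1}`-colouring of the nodes. -/
structure TemporalGraph (V : Type) (k : ℕ) where
  len : ℕ
  len_pos : 0 < len
  adj : ℕ → V → V → Bool
  symm : ∀ i u w, adj i u w = adj i w u
  label : ℕ → V → Fin k → Bool

/-- The colour vector of node `v` at time index `i`, as a real vector. -/
noncomputable def TemporalGraph.colVec {V : Type} {k : ℕ} (TG : TemporalGraph V k)
    (i : ℕ) (v : V) : Vec k :=
  fun j => if TG.label i v j then 1 else 0

/-! ### The product logic PTL_{P,Y} × K -/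

/-- Formulas of the product logic `PTL_{P,Y} × K` over `k` colour propositions. -/
inductive PTLK (k : ℕ) : Type where
  | colour : Fin k → PTLK k
  | not : PTLK k → PTLK k
  | and : PTLK k → PTLK k → PTLK k
  | dia : PTLK k → PTLK k
  | yest : PTLK k → PTLK k
  | past : PTLK k → PTLK k

/-- Satisfaction of a formula at timestamped node `(v, i)` (time indices start at `0`). -/
def Sat {V : Type} {k : ℕ} (TG : TemporalGraph V k) : PTLK k → ℕ → V → Prop
  | .colour j, i, v => TG.label i v j = true
  | .not φ, i, v => ¬ Sat TG φ i v
  | .and φ ψ, i, v => Sat TG φ i v ∧ Sat TG ψ i v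
  | .dia φ, i, v => ∃ u : V, TG.adj i v u = true ∧ Sat TG φ i u
  | .yest φ, i, v => 0 < i ∧ Sat TG φ (i - 1) v
  | .past φ, i, v => ∃ j < i, Sat TG φ j v

/-- The list of subformulas of a formula (containing the formula itself). -/
def PTLK.subformulas {k : ℕ} : PTLK k → List (PTLK k)
  | .colour j => [.colour j]
  | .not φ => .not φ :: φ.subformulas
  | .and φ ψ => .and φ ψ :: (φ.subformulas ++ ψ.subformulas)
  | .dia φ => .dia φ :: φ.subformulas
  | .yest φ => .yest φ :: φ.subformulas
  | .past φ => .past φ :: φ.subformulas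

/-- A formula is temporal if its outermost operator is `Y` or `P`. -/
def PTLK.isTemporal {k : ℕ} : PTLK k → Prop
  | .yest _ => True
  | .past _ => True
  | _ => False

/-- A formula is atomic if it is a colour proposition. -/
def PTLK.isAtomic {k : ℕ} : PTLK k → Prop
  | .colour _ => True
  | _ => False

/-! ### Recursive TGNNs over M̂ -/

/-- A recursive TGNN `T = (M, out)` with `M ∈ M̂`: the input dimension of `M` is
`k + d` where `d` is the output dimension of `M`, and `out` is a single-layer FNN with
trReLU activation. -/
structure RecTGNN (k : ℕ) where
  M : MPNNhat
  dim_in : M.dims 0 = k + M.dims M.depth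
  out : AffineLayer (M.dims M.depth) 1

/-- The state `h_v^{(depth)}(t_i)` computed by a recursive TGNN. -/
noncomputable def RecTGNN.state {k : ℕ} (T : RecTGNN k) {V : Type} [Fintype V] [DecidableEq V]
    (TG : TemporalGraph V k) : ℕ → V → Vec (T.M.dims T.M.depth)
  | 0 => fun v => T.M.toMPNN.run (TG.adj 0)
      (fun u => Vec.cast T.dim_in.symm (Fin.append (TG.colVec 0 u) (fun _ => 0))) v
  | i + 1 => fun v => T.M.toMPNN.run (TG.adj (i + 1))
      (fun u => Vec.cast T.dim_in.symm (Fin.append (TG.colVec (i + 1) u) (T.state TG i u))) v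

/-- The input labelling `h_v^{(0)}(t_i)` fed to `M` at time index `i`. -/
noncomputable def RecTGNN.input {k : ℕ} (T : RecTGNN k) {V : Type} [Fintype V] [DecidableEq V]
    (TG : TemporalGraph V k) : ℕ → V → Vec (T.M.dims 0)
  | 0 => fun u => Vec.cast T.dim_in.symm (Fin.append (TG.colVec 0 u) (fun _ => 0))
  | i + 1 => fun u => Vec.cast T.dim_in.symm (Fin.append (TG.colVec (i + 1) u) (T.state TG i u))

/-- The output `T(TG, v)` of a recursive TGNN at the last time index. -/
noncomputable def RecTGNN.output {k : ℕ} (T : RecTGNN k) {V : Type} [Fintype V] [DecidableEq V]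
    (TG : TemporalGraph V k) (v : V) : ℝ :=
  T.out.eval (T.state TG (TG.len - 1) v) 0

/-- `T` captures `φ`: on every discrete pointed temporal graph, `T` outputs `1`
iff `φ` is satisfied at the distinguished node at the last timestamp. -/
def RecTGNN.captures {k : ℕ} (T : RecTGNN k) (φ : PTLK k) : Prop :=
  ∀ (V : Type) [Fintype V] [DecidableEq V], ∀ (TG : TemporalGraph V k) (v : V),
    Sat TG φ (TG.len - 1) v ↔ T.output TG v = 1

/-! ### Time-and-graph TGNNs -/

/-- A time-and-graph TGNN `T = (M₁, M₂, Cell, out)` with arbitrary MPNNs `M₁, M₂` (of the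
same number of layers), arbitrary cell function and arbitrary output function. -/
structure TandGTGNN (k : ℕ) where
  M₁ : MPNN
  M₂ : MPNN
  sameDepth : M₁.depth = M₂.depth
  hdim : ℕ
  dim1 : M₁.dims 0 = k
  dim2 : M₂.dims 0 = hdim
  cell : Vec (M₁.dims M₁.depth) → Vec (M₂.dims M₂.depth) → Vec hdim
  out : Vec hdim → ℝ

noncomputable def TandGTGNN.state {k : ℕ} (T : TandGTGNN k) {V : Type} [Fintype V]
    [DecidableEq V] (TG : TemporalGraph V k) : ℕ → V → Vec T.hdim
  | 0 => fun v => T.cell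
      (T.M₁.run (TG.adj 0) (fun u => Vec.cast T.dim1.symm (TG.colVec 0 u)) v)
      (T.M₂.run (TG.adj 0) (fun _ => Vec.cast T.dim2.symm (fun _ => 0)) v)
  | i + 1 => fun v => T.cell
      (T.M₁.run (TG.adj (i + 1)) (fun u => Vec.cast T.dim1.symm (TG.colVec (i + 1) u)) v)
      (T.M₂.run (TG.adj (i + 1)) (fun u => Vec.cast T.dim2.symm (T.state TG i u)) v)

noncomputable def TandGTGNN.output {k : ℕ} (T : TandGTGNN k) {V : Type} [Fintype V]
    [DecidableEq V] (TG : TemporalGraph V k) (v : V) : ℝ :=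
  T.out (T.state TG (TG.len - 1) v)

def TandGTGNN.captures {k : ℕ} (T : TandGTGNN k) (φ : PTLK k) : Prop :=
  ∀ (V : Type) [Fintype V] [DecidableEq V], ∀ (TG : TemporalGraph V k) (v : V),
    Sat TG φ (TG.len - 1) v ↔ T.output TG v = 1

/-- Membership of a time-and-graph TGNN in the class `T_TandG[M̂, F]`: both MPNNs lie in
`M̂`, the cell is a single-layer FNN with trReLU activations, and so is the output. -/
def TandGTGNN.inHatF {k : ℕ} (T : TandGTGNN k) : Prop :=
  (∃ N₁ : MPNNhat, T.M₁ = N₁.toMPNN) ∧ (∃ N₂ : MPNNhat, T.M₂ = N₂.toMPNN) ∧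
  (∃ C : AffineLayer (T.M₁.dims T.M₁.depth + T.M₂.dims T.M₂.depth) T.hdim,
     ∀ x y, T.cell x y = C.eval (Fin.append x y)) ∧
  (∃ O : AffineLayer T.hdim 1, ∀ x, T.out x = O.eval x 0)

/-! ### Global TGNNs -/

/-- An operation combining an embedding vector with a time-feature vector of dimension `m`. -/
structure GlobOp (m : ℕ) where
  cdim : ℕ → ℕ
  op : ∀ d : ℕ, Vec d → Vec m → Vec (cdim d)

/-- A global TGNN `T = (M, φ', out)` with arbitrary MPNN components, arbitrary time
function, arbitrary combining operation and arbitrary output function. -/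
structure GlobTGNN (k : ℕ) where
  tdim : ℕ
  circ : GlobOp tdim
  timeFn : ℝ → Vec tdim
  depth : ℕ
  dims : ℕ → ℕ
  dim_in : dims 0 = k
  aggDims : ℕ → ℕ
  agg : ∀ i : ℕ, Multiset (Vec (circ.cdim (dims i))) → Vec (aggDims i)
  comb : ∀ i : ℕ, Vec (dims i) → Vec (aggDims i) → Vec (dims (i + 1))
  out : Vec (dims depth) → ℝ

/-- The embeddings `h_v^{(i)}(t_j)` computed by a global TGNN. -/
noncomputable def GlobTGNN.emb {k : ℕ} (T : GlobTGNN k) {V : Type} [Fintype V] [DecidableEq V]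
    (TG : TemporalGraph V k) : (i : ℕ) → ℕ → V → Vec (T.dims i)
  | 0 => fun j v => Vec.cast T.dim_in.symm (TG.colVec j v)
  | i + 1 => fun j v =>
      T.comb i (T.emb TG i j v)
        (T.agg i ((Finset.range (j + 1)).val.bind fun h =>
          (Finset.univ.filter fun u => TG.adj h v u = true).val.map
            fun u => T.circ.op _ (T.emb TG i h u) (T.timeFn ((j : ℝ) - (h : ℝ)))))

noncomputable def GlobTGNN.output {k : ℕ} (T : GlobTGNN k) {V : Type} [Fintype V]
    [DecidableEq V] (TG : TemporalGraph V k) (v : V) : ℝ :=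
  T.out (T.emb TG T.depth (TG.len - 1) v)

def GlobTGNN.captures {k : ℕ} (T : GlobTGNN k) (φ : PTLK k) : Prop :=
  ∀ (V : Type) [Fintype V] [DecidableEq V], ∀ (TG : TemporalGraph V k) (v : V),
    Sat TG φ (TG.len - 1) v ↔ T.output TG v = 1

/-- Vector concatenation as the combining operation `∥`. -/
def concatOp (m : ℕ) : GlobOp m where
  cdim := fun d => d + m
  op := fun _ x y => Fin.append x y

/-- A time2vec function. -/
structure Time2Vec (m : ℕ) where
  w : Fin m → ℚ
  b : Fin m → ℚ
  σ : ℝ → ℝ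
  period : ℝ
  period_pos : 0 < period
  periodic : Function.Periodic σ period

noncomputable def Time2Vec.eval {m : ℕ} (f : Time2Vec m) (t : ℝ) : Vec m :=
  fun j => if (j : ℕ) = 0 then (f.w j : ℝ) * t + (f.b j : ℝ)
           else f.σ ((f.w j : ℝ) * t + (f.b j : ℝ))

/-- The class `T_glob[M̂_msg, Q_time2vec, ∥]`: global TGNNs whose MPNN lies in `M̂_msg`
(combination functions given by trReLU FNNs and aggregation `agg S = Σ_{x∈S} msg(x)` with
`msg` a trReLU FNN), whose time function is a time2vec function, and whose combining
operation is vector concatenation; the output is a single-layer trReLU FNN. -/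
structure GlobTGNNmsg (k : ℕ) where
  tdim : ℕ
  timeFn : Time2Vec tdim
  depth : ℕ
  dims : ℕ → ℕ
  dim_in : dims 0 = k
  aggDims : ℕ → ℕ
  msg : ∀ i : ℕ, FNN (dims i + tdim) (aggDims i)
  comb : ∀ i : ℕ, FNN (dims i + aggDims i) (dims (i + 1))
  out : AffineLayer (dims depth) 1

noncomputable def GlobTGNNmsg.toGlob {k : ℕ} (T : GlobTGNNmsg k) : GlobTGNN k where
  tdim := T.tdim
  circ := concatOp T.tdim
  timeFn := T.timeFn.eval
  depth := T.depth
  dims := T.dims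
  dim_in := T.dim_in
  aggDims := T.aggDims
  agg := fun i S => sumAgg (T.aggDims i) (S.map (T.msg i).eval)
  comb := fun i x y => (T.comb i).eval (Fin.append x y)
  out := fun x => (T.out).eval x 0

noncomputable def GlobTGNNmsg.output {k : ℕ} (T : GlobTGNNmsg k) {V : Type} [Fintype V]
    [DecidableEq V] (TG : TemporalGraph V k) (v : V) : ℝ :=
  T.toGlob.output TG v

def GlobTGNNmsg.captures {k : ℕ} (T : GlobTGNNmsg k) (φ : PTLK k) : Prop :=
  ∀ (V : Type) [Fintype V] [DecidableEq V], ∀ (TG : TemporalGraph V k) (v : V),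
    Sat TG φ (TG.len - 1) v ↔ T.output TG v = 1

/-! ### Auxiliary material for the proof -/

open Classical in
/-- Boolean value of a proposition as a real number. -/
noncomputable def bval (p : Prop) : ℝ := if p then 1 else 0

lemma bval_zero_or_one (p : Prop) : bval p = 0 ∨ bval p = 1 := by
  unfold bval; split <;> simp

lemma trReLU_of_zo {x : ℝ} (h : x = 0 ∨ x = 1) : trReLU x = x := by
  rcases h with h | h <;> simp [h, trReLU]

/-- Total indexing of a vector by a natural number (0 outside the range). -/
noncomputable def vget {m : ℕ} (x : Vec m) (n : ℕ) : ℝ :=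
  if h : n < m then x ⟨n, h⟩ else 0

lemma vget_fin {m : ℕ} (x : Vec m) (j : Fin m) : vget x j.val = x j := by
  simp [vget, j.isLt]

lemma vget_append {a b : ℕ} (x : Vec a) (y : Vec b) (n : ℕ) :
    vget (Fin.append x y) n = if n < a then vget x n else vget y (n - a) := by
  unfold vget
  by_cases h2 : n < a
  · have h1 : n < a + b := by omega
    simp only [dif_pos h1, if_pos h2, dif_pos h2]
    rw [show (⟨n, h1⟩ : Fin (a + b)) = Fin.castAdd b ⟨n, h2⟩ from rfl, Fin.append_left]
  · simp only [if_neg h2]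
    by_cases h3 : n - a < b
    · have h1 : n < a + b := by omega
      simp only [dif_pos h1, dif_pos h3]
      rw [show (⟨n, h1⟩ : Fin (a + b)) = Fin.natAdd a ⟨n - a, h3⟩ by
        apply Fin.ext; simp; omega, Fin.append_right]
    · have h1 : ¬ n < a + b := by omega
      simp only [dif_neg h1, dif_neg h3]

/-- A sparse row: list of (index, coefficient) pairs, out-of-range indices ignored. -/
def rowOfN (m : ℕ) : List (ℕ × ℚ) → Fin m → ℚ
  | [] => fun _ => 0
  | (a, c) :: ts => fun i => (if i.val = a then c else 0) + rowOfN m ts i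

lemma sum_ite_val {m : ℕ} (a : ℕ) (c : ℝ) (x : Vec m) :
    (∑ i : Fin m, (if i.val = a then c else 0) * x i) = c * vget x a := by
  by_cases h : a < m
  · rw [Finset.sum_eq_single (⟨a, h⟩ : Fin m)]
    · simp [vget, h]
    · intro b _ hb
      have : b.val ≠ a := fun hh => hb (Fin.ext hh)
      simp [this]
    · simp
  · rw [Finset.sum_eq_zero, vget]
    · simp [h]
    · intro b _
      have : b.val ≠ a := by omega
      simp [this]

lemma sum_rowOfN {m : ℕ} (ts : List (ℕ × ℚ)) (x : Vec m) :
    (∑ i, (rowOfN m ts i : ℝ) * x i) = (ts.map fun p => (p.2 : ℝ) * vget x p.1).sum := by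
  induction ts with
  | nil => simp [rowOfN]
  | cons t ts ih =>
    obtain ⟨a, c⟩ := t
    simp only [rowOfN, List.map_cons, List.sum_cons]
    push_cast
    simp only [add_mul, Finset.sum_add_distrib, ih]
    congr 1
    rw [← sum_ite_val a (c : ℝ) x]
    congr 1; funext i
    split <;> simp

/-- An affine layer given by sparse rows over natural-number indices. -/
noncomputable def mkLayerN (m n : ℕ) (r : Fin n → List (ℕ × ℚ) × ℚ) : AffineLayer m n where
  weight := fun j => rowOfN m (r j).1
  bias := fun j => (r j).2

lemma mkLayerN_eval {m n : ℕ} (r : Fin n → List (ℕ × ℚ) × ℚ) (x : Vec m) (j : Fin n) :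
    (mkLayerN m n r).eval x j
      = trReLU (((r j).1.map fun p => (p.2 : ℝ) * vget x p.1).sum + ((r j).2 : ℝ)) := by
  simp [mkLayerN, AffineLayer.eval, sum_rowOfN]

/-- A depth-one FNN from a single affine layer. -/
noncomputable def singleFNN {m n : ℕ} (L : AffineLayer m n) : FNN m n where
  depth := 1
  dims := fun i => match i with | 0 => m | _ + 1 => n
  dim_in := rfl
  dim_out := rfl
  layers := fun i => match i with
    | 0 => L
    | _ + 1 => { weight := fun _ _ => 0, bias := fun _ => 0 }

lemma singleFNN_eval {m n : ℕ} (L : AffineLayer m n) (x : Vec m) :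
    (singleFNN L).eval x = L.eval x := rfl

/-! #### Subformula positions -/

lemma PTLK.subformulas_head {k : ℕ} (φ : PTLK k) : ∃ t, φ.subformulas = φ :: t := by
  cases φ <;> exact ⟨_, rfl⟩

lemma PTLK.subformulas_ne_nil {k : ℕ} (φ : PTLK k) : φ.subformulas ≠ [] := by
  obtain ⟨t, ht⟩ := φ.subformulas_head; simp [ht]

lemma PTLK.subformulas_length_pos {k : ℕ} (φ : PTLK k) : 0 < φ.subformulas.length :=
  List.length_pos_iff.mpr φ.subformulas_ne_nil

lemma PTLK.subformulas_getElem_zero {k : ℕ} (φ : PTLK k) (h : 0 < φ.subformulas.length) :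
    φ.subformulas[0] = φ := by
  obtain ⟨t, ht⟩ := φ.subformulas_head; simp [ht]

lemma PTLK.subformulas_closed {k : ℕ} (φ : PTLK k) :
    ∀ (q : ℕ) (h : q < φ.subformulas.length),
      (φ.subformulas[q]).subformulas <+: φ.subformulas.drop q := by
  induction φ with
  | colour j =>
    intro q h
    simp only [PTLK.subformulas, List.length_cons, List.length_nil] at h
    interval_cases q
    · exact List.prefix_refl _
  | and φ ψ ihφ ihψ =>
    intro q h
    match q with
    | 0 => exact List.prefix_refl _
    | q + 1 =>
      simp only [PTLK.subformulas, List.length_cons, List.length_append] at h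
      simp only [PTLK.subformulas, List.getElem_cons_succ, List.drop_succ_cons]
      by_cases hq : q < φ.subformulas.length
      · rw [List.getElem_append_left hq]
        have h1 : (φ.subformulas ++ ψ.subformulas).drop q
            = φ.subformulas.drop q ++ ψ.subformulas := by
          rw [List.drop_append_of_le_length (by omega)]
        rw [h1]
        exact (ihφ q hq).trans (List.prefix_append _ _)
      · rw [List.getElem_append_right (by omega)]
        have h1 : (φ.subformulas ++ ψ.subformulas).drop q
            = ψ.subformulas.drop (q - φ.subformulas.length) := by
          rw [show q = φ.subformulas.length + (q - φ.subformulas.length) by omega,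
            List.drop_append]
          rw [List.drop_eq_nil_of_le (by omega), List.nil_append]
        rw [h1]
        exact ihψ _ (by omega)
  | not φ ih =>
    intro q h
    match q with
    | 0 => exact List.prefix_refl _
    | q + 1 =>
      simp only [PTLK.subformulas, List.length_cons] at h
      simp only [PTLK.subformulas, List.getElem_cons_succ, List.drop_succ_cons]
      exact ih q (by omega)
  | dia φ ih =>
    intro q h
    match q with
    | 0 => exact List.prefix_refl _
    | q + 1 =>
      simp only [PTLK.subformulas, List.length_cons] at h
      simp only [PTLK.subformulas, List.getElem_cons_succ, List.drop_succ_cons]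
      exact ih q (by omega)
  | yest φ ih =>
    intro q h
    match q with
    | 0 => exact List.prefix_refl _
    | q + 1 =>
      simp only [PTLK.subformulas, List.length_cons] at h
      simp only [PTLK.subformulas, List.getElem_cons_succ, List.drop_succ_cons]
      exact ih q (by omega)
  | past φ ih =>
    intro q h
    match q with
    | 0 => exact List.prefix_refl _
    | q + 1 =>
      simp only [PTLK.subformulas, List.length_cons] at h
      simp only [PTLK.subformulas, List.getElem_cons_succ, List.drop_succ_cons]
      exact ih q (by omega)

/-- If `A` is a prefix of `L.drop p` then positions of `A` are found in `L`. -/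
lemma getElem?_of_prefix_drop {α : Type*} {A L : List α} {p : ℕ}
    (h : A <+: L.drop p) {i : ℕ} (hi : i < A.length) :
    L[p + i]? = some A[i] := by
  obtain ⟨tl, htl⟩ := h
  have h1 : (L.drop p)[i]? = some A[i] := by
    rw [← htl, List.getElem?_append, if_pos hi, List.getElem?_eq_getElem hi]
  rwa [List.getElem?_drop] at h1

/-- Generic positioning lemma: if the subformula list of `φ.subformulas[q]` has the shape
`φ.subformulas[q] :: (pre ++ (ψ.subformulas ++ rest))`, then `ψ` sits at position
`q + 1 + pre.length` of `φ.subformulas`. -/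
lemma subf_at {k : ℕ} {φ ψ : PTLK k} {q : ℕ} (hq : q < φ.subformulas.length)
    (pre rest : List (PTLK k))
    (hsub : (φ.subformulas[q]).subformulas
      = φ.subformulas[q] :: (pre ++ (ψ.subformulas ++ rest))) :
    φ.subformulas[(q + 1) + pre.length]? = some ψ := by
  have h := φ.subformulas_closed q hq
  rw [hsub] at h
  have hlen : pre.length + 1
      < (φ.subformulas[q] :: (pre ++ (ψ.subformulas ++ rest))).length := by
    simp only [List.length_cons, List.length_append]
    have := ψ.subformulas_length_pos; omega
  have h2 := getElem?_of_prefix_drop h (i := pre.length + 1) hlen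
  rw [show q + (pre.length + 1) = (q + 1) + pre.length by omega] at h2
  rw [h2]
  congr 1
  rw [List.getElem_cons_succ,
    List.getElem_append_right (le_refl pre.length)]
  simp only [Nat.sub_self]
  rw [List.getElem_append_left ψ.subformulas_length_pos]
  exact ψ.subformulas_getElem_zero _

/-! #### The network -/

/-- Sparse row computing the truth value of the subformula sitting at position `q`.
Indices `< k + d + d` refer to the node's own vector (colours ++ previous values ++
current values); indices `≥ k + d + d` refer to the aggregated neighbour sum. -/
def formulaRow (k d q : ℕ) : PTLK k → List (ℕ × ℚ) × ℚ
  | .colour c => ([((c : ℕ), 1)], 0)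
  | .not _ => ([(k + d + (q + 1), -1)], 1)
  | .and ψ₁ _ => ([(k + d + (q + 1), 1), (k + d + (q + 1 + ψ₁.subformulas.length), 1)], -1)
  | .dia _ => ([((k + d + d) + (k + d + (q + 1)), 1)], 0)
  | .yest _ => ([(k + (q + 1), 1)], 0)
  | .past _ => ([(k + q, 1), (k + (q + 1), 1)], 0)

/-- The rows of the `t`-th middle layer (`1 ≤ t`): copy the colour and previous-value
blocks, copy already-computed current values, compute slot `d - t`. -/
def middleRows (k : ℕ) (L : List (PTLK k)) (t : ℕ)
    (j : Fin (k + L.length + L.length)) : List (ℕ × ℚ) × ℚ :=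
  if j.val < k + L.length then ([(j.val, 1)], 0)
  else
    if L.length < (j.val - (k + L.length)) + t then ([(j.val, 1)], 0)
    else if (j.val - (k + L.length)) + t < L.length then ([], 0)
    else match L[j.val - (k + L.length)]? with
      | some ψ => formulaRow k L.length (j.val - (k + L.length)) ψ
      | none => ([], 0)

/-- The rows of the first layer: load the current colours and the current-value block of
the previous state; zero the current-value block. -/
def firstRows (k d : ℕ) (j : Fin (k + d + d)) : List (ℕ × ℚ) × ℚ :=
  if j.val < k then ([(j.val, 1)], 0)
  else if j.val < k + d then ([(k + (k + d) + (j.val - k), 1)], 0)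
  else ([], 0)

/-- The MPNN of the recursive TGNN capturing `φ`. -/
noncomputable def net (k : ℕ) (φ : PTLK k) : MPNNhat where
  depth := φ.subformulas.length + 1
  dims := fun i => match i with
    | 0 => k + (k + φ.subformulas.length + φ.subformulas.length)
    | _ + 1 => k + φ.subformulas.length + φ.subformulas.length
  comb := fun i => match i with
    | 0 => singleFNN (mkLayerN _ _ (firstRows k φ.subformulas.length))
    | t + 1 => singleFNN (mkLayerN _ _ (middleRows k φ.subformulas (t + 1)))

/-- The recursive TGNN capturing `φ`. -/
noncomputable def tgnn (k : ℕ) (φ : PTLK k) : RecTGNN k where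
  M := net k φ
  dim_in := rfl
  out := mkLayerN _ 1 (fun _ => ([(k + φ.subformulas.length, 1)], 0))

/-! #### Semantic specifications -/

section Spec

variable {k : ℕ} {V : Type} [Fintype V] [DecidableEq V]

/-- Intended current-value block at time index `i`. -/
noncomputable def curS (φ : PTLK k) (TG : TemporalGraph V k) (i : ℕ) (v : V) (q : ℕ) : ℝ :=
  match φ.subformulas[q]? with
  | some ψ => bval (Sat TG ψ i v)
  | none => 0

/-- Intended previous-value block at time index `i`. -/
noncomputable def prevS (φ : PTLK k) (TG : TemporalGraph V k) : ℕ → V → ℕ → ℝ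
  | 0 => fun _ _ => 0
  | i + 1 => fun v q => curS φ TG i v q

/-- Intended value of entry `n` of the embedding after `m` middle layers at time `i`. -/
noncomputable def pSpec (φ : PTLK k) (TG : TemporalGraph V k) (m i : ℕ) (v : V) (n : ℕ) : ℝ :=
  if n < k then vget (TG.colVec i v) n
  else if n < k + φ.subformulas.length then prevS φ TG i v (n - k)
  else if n < k + φ.subformulas.length + φ.subformulas.length then
    (if φ.subformulas.length ≤ (n - (k + φ.subformulas.length)) + m then
      curS φ TG i v (n - (k + φ.subformulas.length)) else 0)
  else 0

lemma vget_colVec_zo (TG : TemporalGraph V k) (i : ℕ) (v : V) (n : ℕ) :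
    vget (TG.colVec i v) n = 0 ∨ vget (TG.colVec i v) n = 1 := by
  unfold vget TemporalGraph.colVec
  split_ifs <;> simp

lemma curS_zo (φ : PTLK k) (TG : TemporalGraph V k) (i : ℕ) (v : V) (q : ℕ) :
    curS φ TG i v q = 0 ∨ curS φ TG i v q = 1 := by
  unfold curS
  rcases h : φ.subformulas[q]? with _ | ψ
  · simp
  · exact bval_zero_or_one _

lemma prevS_zo (φ : PTLK k) (TG : TemporalGraph V k) (i : ℕ) (v : V) (q : ℕ) :
    prevS φ TG i v q = 0 ∨ prevS φ TG i v q = 1 := by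
  cases i with
  | zero => simp [prevS]
  | succ i => exact curS_zo φ TG i v q

lemma pSpec_zo (φ : PTLK k) (TG : TemporalGraph V k) (m i : ℕ) (v : V) (n : ℕ) :
    pSpec φ TG m i v n = 0 ∨ pSpec φ TG m i v n = 1 := by
  unfold pSpec
  split_ifs
  · exact vget_colVec_zo TG i v n
  · exact prevS_zo φ TG i v _
  · exact curS_zo φ TG i v _
  · simp
  · simp

lemma trReLU_copy {x : ℝ} (h : x = 0 ∨ x = 1) : trReLU (1 * x + 0 + 0) = x := by
  rcases h with h | h <;> simp [h, trReLU]

lemma trReLU_sum_bval (s : Finset V) (P : V → Prop) :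
    trReLU (∑ u ∈ s, bval (P u)) = bval (∃ u ∈ s, P u) := by
  by_cases h : ∃ u ∈ s, P u
  · obtain ⟨u, hu, hP⟩ := h
    have h1 : (1 : ℝ) ≤ ∑ u ∈ s, bval (P u) := by
      have h2 := Finset.single_le_sum (f := fun u => bval (P u))
        (fun u _ => by rcases bval_zero_or_one (P u) with h | h <;> simp [h]) hu
      simpa [bval, hP] using h2
    have h3 : bval (∃ u ∈ s, P u) = 1 := by simp [bval]; exact ⟨u, hu, hP⟩
    rw [h3]
    unfold trReLU
    rw [min_eq_left h1]
    norm_num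
  · have h0 : ∀ u ∈ s, bval (P u) = 0 := by
      intro u hu
      have : ¬ P u := fun hP => h ⟨u, hu, hP⟩
      simp [bval, this]
    rw [Finset.sum_eq_zero h0]
    have h3 : bval (∃ u ∈ s, P u) = 0 := by simp [bval, h]
    simp [trReLU, h3]

lemma sat_past_succ (TG : TemporalGraph V k) (ψ : PTLK k) (i : ℕ) (v : V) :
    Sat TG (.past ψ) (i + 1) v ↔ Sat TG (.past ψ) i v ∨ Sat TG ψ i v := by
  show (∃ j < i + 1, Sat TG ψ j v) ↔ (∃ j < i, Sat TG ψ j v) ∨ Sat TG ψ i v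
  constructor
  · rintro ⟨j, hj, h⟩
    rcases Nat.lt_succ_iff_lt_or_eq.mp hj with h' | h'
    · exact Or.inl ⟨j, h', h⟩
    · subst h'; exact Or.inr h
  · rintro (⟨j, hj, h⟩ | h)
    · exact ⟨j, by omega, h⟩
    · exact ⟨i, by omega, h⟩

lemma vget_eq {m : ℕ} (x : Vec m) {n : ℕ} (h : n < m) : vget x n = x ⟨n, h⟩ := dif_pos h

lemma vget_oob {m : ℕ} (x : Vec m) {n : ℕ} (h : ¬ n < m) : vget x n = 0 := dif_neg h

lemma vget_cast {m n : ℕ} (h : m = n) (x : Vec m) (p : ℕ) :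
    vget (Vec.cast h x) p = vget x p := by
  subst h
  unfold vget Vec.cast
  split_ifs with hp
  · congr 1
  · rfl

lemma MPNN.emb_succ (M : MPNN) {V : Type} [Fintype V] [DecidableEq V]
    (adj : V → V → Bool) (c : V → Vec (M.dims 0)) (i : ℕ) (v : V) :
    M.emb adj c (i + 1) v
      = M.comb i (M.emb adj c i v)
          (M.agg i ((Finset.univ.filter fun u => adj v u = true).val.map
            fun u => M.emb adj c i u)) := rfl

lemma sumAgg_map {V : Type} [Fintype V] [DecidableEq V] (s : Finset V) {d : ℕ}
    (f : V → Vec d) (j : Fin d) :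
    sumAgg d (s.val.map f) j = ∑ u ∈ s, f u j := by
  simp only [sumAgg, Multiset.map_map, Function.comp]
  rfl

section Core

set_option linter.unusedSectionVars false

variable {k : ℕ} {V : Type} [Fintype V] [DecidableEq V]

lemma net_comb_succ (φ : PTLK k) (t : ℕ) (x : Vec ((net k φ).toMPNN.dims (t + 1)))
    (y : Vec ((net k φ).toMPNN.aggDims (t + 1))) :
    (net k φ).toMPNN.comb (t + 1) x y
      = (mkLayerN _ _ (middleRows k φ.subformulas (t + 1))).eval (Fin.append x y) := rfl

lemma net_comb_zero (φ : PTLK k) (x : Vec ((net k φ).toMPNN.dims 0))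
    (y : Vec ((net k φ).toMPNN.aggDims 0)) :
    (net k φ).toMPNN.comb 0 x y
      = (mkLayerN _ _ (firstRows k φ.subformulas.length)).eval (Fin.append x y) := rfl

lemma net_agg (φ : PTLK k) (t : ℕ) (S : Multiset (Vec ((net k φ).toMPNN.dims t))) :
    (net k φ).toMPNN.agg t S = sumAgg _ S := rfl

/-- Evaluating `curS` at a known position. -/
lemma curS_of_getElem? {φ ψ : PTLK k} {q : ℕ} {TG : TemporalGraph V k} {i : ℕ} {v : V}
    (h : φ.subformulas[q]? = some ψ) : curS φ TG i v q = bval (Sat TG ψ i v) := by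
  unfold curS; rw [h]

lemma firstRows_mk (k d n : ℕ) (hn : n < k + d + d) :
    firstRows k d ⟨n, hn⟩
      = if n < k then ([(n, 1)], 0)
        else if n < k + d then ([(k + (k + d) + (n - k), 1)], 0)
        else ([], 0) := rfl

lemma middleRows_mk (L : List (PTLK k)) (t n : ℕ) (hn : n < k + L.length + L.length) :
    middleRows k L t ⟨n, hn⟩
      = if n < k + L.length then ([(n, 1)], 0)
        else
          if L.length < (n - (k + L.length)) + t then ([(n, 1)], 0)
          else if (n - (k + L.length)) + t < L.length then ([], 0)
          else match L[n - (k + L.length)]? with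
            | some ψ => formulaRow k L.length (n - (k + L.length)) ψ
            | none => ([], 0) := rfl

lemma one_mul_add_zero (x : ℝ) : 1 * x + 0 + 0 = x := by ring

lemma pSpec_col (φ : PTLK k) (TG : TemporalGraph V k) (m i : ℕ) (v : V) {q : ℕ}
    (hq : q < k) : pSpec φ TG m i v q = vget (TG.colVec i v) q := by
  unfold pSpec
  rw [if_pos hq]

lemma pSpec_prev (φ : PTLK k) (TG : TemporalGraph V k) (m i : ℕ) (v : V) {q : ℕ}
    (hq : q < φ.subformulas.length) :
    pSpec φ TG m i v (k + q) = prevS φ TG i v q := by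
  have c1 : ¬ (k + q < k) := by omega
  have c2 : k + q < k + φ.subformulas.length := by omega
  unfold pSpec
  rw [if_neg c1, if_pos c2, show k + q - k = q from by omega]

lemma pSpec_cur (φ : PTLK k) (TG : TemporalGraph V k) (m i : ℕ) (v : V) {q : ℕ}
    (hq : q < φ.subformulas.length) :
    pSpec φ TG m i v (k + φ.subformulas.length + q)
      = if φ.subformulas.length ≤ q + m then curS φ TG i v q else 0 := by
  have c1 : ¬ (k + φ.subformulas.length + q < k) := by omega
  have c2 : ¬ (k + φ.subformulas.length + q < k + φ.subformulas.length) := by omega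
  have c3 : k + φ.subformulas.length + q
      < k + φ.subformulas.length + φ.subformulas.length := by omega
  unfold pSpec
  rw [if_neg c1, if_neg c2, if_pos c3,
    show k + φ.subformulas.length + q - (k + φ.subformulas.length) = q from by omega]

lemma pSpec_oob (φ : PTLK k) (TG : TemporalGraph V k) (m i : ℕ) (v : V) {n : ℕ}
    (hn : ¬ n < k + φ.subformulas.length + φ.subformulas.length) :
    pSpec φ TG m i v n = 0 := by
  have c1 : ¬ (n < k) := by omega
  have c2 : ¬ (n < k + φ.subformulas.length) := by omega
  unfold pSpec
  rw [if_neg c1, if_neg c2, if_neg hn]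

/-- Core lemma: within one timestep, the embeddings of the network compute `pSpec`. -/
lemma emb_spec (φ : PTLK k) (TG : TemporalGraph V k) (i : ℕ)
    (c : V → Vec ((net k φ).toMPNN.dims 0))
    (hc1 : ∀ (u : V) (n : ℕ), n < k → vget (c u) n = vget (TG.colVec i u) n)
    (hc2 : ∀ (u : V) (q : ℕ), q < φ.subformulas.length →
      vget (c u) (k + (k + φ.subformulas.length) + q) = prevS φ TG i u q) :
    ∀ m, m ≤ φ.subformulas.length → ∀ (v : V) (n : ℕ),
      vget ((net k φ).toMPNN.emb (TG.adj i) c (m + 1) v) n = pSpec φ TG m i v n := by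
  intro m
  induction m with
  | zero =>
    intro _ v n
    by_cases hn : n < k + φ.subformulas.length + φ.subformulas.length
    case neg =>
      rw [vget_oob _ (show ¬ n < (net k φ).toMPNN.dims (0 + 1) from hn),
        pSpec_oob φ TG 0 i v hn]
    case pos =>
      rw [vget_eq _ (show n < (net k φ).toMPNN.dims (0 + 1) from hn),
        MPNN.emb_succ, net_comb_zero]
      erw [mkLayerN_eval]
      rw [show ((net k φ).toMPNN.emb (TG.adj i) c 0) = c from rfl]
      erw [firstRows_mk k φ.subformulas.length n hn]
      by_cases h1 : n < k
      · rw [if_pos h1]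
        simp only [List.map_cons, List.map_nil, List.sum_cons, List.sum_nil,
          Rat.cast_one, Rat.cast_zero]
        rw [vget_append, if_pos (show n < (net k φ).toMPNN.dims 0 from
          (by omega : n < k + (k + φ.subformulas.length + φ.subformulas.length)))]
        rw [hc1 v n h1, pSpec_col φ TG 0 i v h1]
        exact trReLU_copy (vget_colVec_zo TG i v n)
      · rw [if_neg h1]
        by_cases h2 : n < k + φ.subformulas.length
        · rw [if_pos h2]
          obtain ⟨p, rfl⟩ : ∃ p, n = k + p := ⟨n - k, by omega⟩
          have hpd : p < φ.subformulas.length := by omega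
          rw [show k + p - k = p from by omega]
          simp only [List.map_cons, List.map_nil, List.sum_cons, List.sum_nil,
            Rat.cast_one, Rat.cast_zero]
          rw [vget_append, if_pos (show k + (k + φ.subformulas.length) + p
                < (net k φ).toMPNN.dims 0 from
            (by omega : k + (k + φ.subformulas.length) + p
                < k + (k + φ.subformulas.length + φ.subformulas.length)))]
          rw [hc2 v p hpd, pSpec_prev φ TG 0 i v hpd]
          exact trReLU_copy (prevS_zo φ TG i v p)
        · rw [if_neg h2]
          obtain ⟨q, rfl⟩ : ∃ q, n = k + φ.subformulas.length + q :=
            ⟨n - (k + φ.subformulas.length), by omega⟩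
          have hqd : q < φ.subformulas.length := by omega
          simp only [List.map_nil, List.sum_nil, Rat.cast_zero]
          rw [pSpec_cur φ TG 0 i v hqd, if_neg (show ¬ φ.subformulas.length ≤ q + 0 from
            by omega)]
          simp [trReLU]
  | succ m ih =>
    intro hm v n
    have ihm := ih (by omega)
    by_cases hn : n < k + φ.subformulas.length + φ.subformulas.length
    case neg =>
      rw [vget_oob _ (show ¬ n < (net k φ).toMPNN.dims (m + 1 + 1) from hn),
        pSpec_oob φ TG (m + 1) i v hn]
    case pos =>
      rw [vget_eq _ (show n < (net k φ).toMPNN.dims (m + 1 + 1) from hn),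
        MPNN.emb_succ, net_comb_succ]
      erw [mkLayerN_eval]
      rw [net_agg]
      erw [middleRows_mk φ.subformulas (m + 1) n hn]
      by_cases h1 : n < k + φ.subformulas.length
      · rw [if_pos h1]
        simp only [List.map_cons, List.map_nil, List.sum_cons, List.sum_nil,
          Rat.cast_one, Rat.cast_zero]
        erw [vget_append, if_pos (show n < (net k φ).toMPNN.dims (m + 1) from
          (by omega : n < k + φ.subformulas.length + φ.subformulas.length))]
        rw [ihm v n]
        have hsame : pSpec φ TG (m + 1) i v n = pSpec φ TG m i v n := by
          by_cases h : n < k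
          · rw [pSpec_col φ TG (m + 1) i v h, pSpec_col φ TG m i v h]
          · obtain ⟨p, rfl⟩ : ∃ p, n = k + p := ⟨n - k, by omega⟩
            have hpd : p < φ.subformulas.length := by omega
            rw [pSpec_prev φ TG (m + 1) i v hpd, pSpec_prev φ TG m i v hpd]
        rw [hsame]
        exact trReLU_copy (pSpec_zo φ TG m i v n)
      · rw [if_neg h1]
        obtain ⟨q, rfl⟩ : ∃ q, n = k + φ.subformulas.length + q :=
          ⟨n - (k + φ.subformulas.length), by omega⟩
        have hqd : q < φ.subformulas.length := by omega
        rw [show k + φ.subformulas.length + q - (k + φ.subformulas.length) = q from by omega]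
        by_cases h2 : φ.subformulas.length < q + (m + 1)
        · -- already-computed slot: copy
          rw [if_pos h2]
          simp only [List.map_cons, List.map_nil, List.sum_cons, List.sum_nil,
            Rat.cast_one, Rat.cast_zero]
          erw [vget_append, if_pos (show k + φ.subformulas.length + q
                < (net k φ).toMPNN.dims (m + 1) from
            (by omega : k + φ.subformulas.length + q
                < k + φ.subformulas.length + φ.subformulas.length))]
          rw [ihm v (k + φ.subformulas.length + q),
            pSpec_cur φ TG m i v hqd, pSpec_cur φ TG (m + 1) i v hqd,
            if_pos (show φ.subformulas.length ≤ q + m from by omega),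
            if_pos (show φ.subformulas.length ≤ q + (m + 1) from by omega)]
          exact trReLU_copy (curS_zo φ TG i v q)
        · by_cases h3 : q + (m + 1) < φ.subformulas.length
          · -- not yet computed: zero
            rw [if_neg h2, if_pos h3]
            simp only [List.map_nil, List.sum_nil, Rat.cast_zero]
            rw [pSpec_cur φ TG (m + 1) i v hqd,
              if_neg (show ¬ φ.subformulas.length ≤ q + (m + 1) from by omega)]
            simp [trReLU]
          · -- the slot computed by this layer
            rw [if_neg h2, if_neg h3]
            rw [List.getElem?_eq_getElem hqd]
            rw [pSpec_cur φ TG (m + 1) i v hqd,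
              if_pos (show φ.subformulas.length ≤ q + (m + 1) from by omega),
              curS_of_getElem? (List.getElem?_eq_getElem hqd)]
            -- values of already-computed current slots of the input vector
            have hcur : ∀ (u : V) (p : ℕ) (ψ : PTLK k), φ.subformulas[p]? = some ψ → q < p →
                vget (Fin.append ((net k φ).toMPNN.emb (TG.adj i) c (m + 1) u)
                  (sumAgg _ ((Finset.univ.filter fun w => TG.adj i u w = true).val.map
                    fun w => (net k φ).toMPNN.emb (TG.adj i) c (m + 1) w)))
                  (k + φ.subformulas.length + p) = bval (Sat TG ψ i u) := by
              intro u p ψ hp hqp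
              have hpd : p < φ.subformulas.length := by
                rcases List.getElem?_eq_some_iff.mp hp with ⟨h, _⟩
                exact h
              erw [vget_append, if_pos (show k + φ.subformulas.length + p
                    < (net k φ).toMPNN.dims (m + 1) from
                (by omega : k + φ.subformulas.length + p
                    < k + φ.subformulas.length + φ.subformulas.length))]
              rw [ihm u (k + φ.subformulas.length + p), pSpec_cur φ TG m i u hpd,
                if_pos (show φ.subformulas.length ≤ p + m from by omega)]
              exact curS_of_getElem? hp
            -- values of the previous-value block of the input vector
            have hprev : ∀ (u : V) (p : ℕ), p < φ.subformulas.length →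
                vget (Fin.append ((net k φ).toMPNN.emb (TG.adj i) c (m + 1) u)
                  (sumAgg _ ((Finset.univ.filter fun w => TG.adj i u w = true).val.map
                    fun w => (net k φ).toMPNN.emb (TG.adj i) c (m + 1) w)))
                  (k + p) = prevS φ TG i u p := by
              intro u p hpd
              erw [vget_append, if_pos (show k + p < (net k φ).toMPNN.dims (m + 1) from
                (by omega : k + p < k + φ.subformulas.length + φ.subformulas.length))]
              rw [ihm u (k + p), pSpec_prev φ TG m i u hpd]
            cases hLq : φ.subformulas[q] with
            | colour col =>
              have hcol := col.isLt
              unfold formulaRow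
              simp only [List.map_cons, List.map_nil, List.sum_cons, List.sum_nil,
                Rat.cast_one, Rat.cast_zero]
              erw [vget_append, if_pos (show (col : ℕ) < (net k φ).toMPNN.dims (m + 1) from
                (by omega : (col : ℕ) < k + φ.subformulas.length + φ.subformulas.length))]
              rw [ihm v (col : ℕ), pSpec_col φ TG m i v hcol, vget_fin]
              show trReLU (1 * (if TG.label i v col then (1:ℝ) else 0) + 0 + 0)
                = bval (Sat TG (.colour col) i v)
              have hiff : Sat TG (.colour col) i v ↔ TG.label i v col = true := Iff.rfl
              by_cases hl : TG.label i v col <;> simp [bval, hl, hiff, trReLU]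
            | not ψ' =>
              have hpos : φ.subformulas[q + 1]? = some ψ' := by
                have h := subf_at (ψ := ψ') hqd [] [] (by rw [hLq]; simp [PTLK.subformulas])
                simpa using h
              unfold formulaRow
              simp only [List.map_cons, List.map_nil, List.sum_cons, List.sum_nil,
                Rat.cast_one, Rat.cast_zero, Rat.cast_neg]
              erw [hcur v (q + 1) ψ' hpos (by omega)]
              show trReLU (-1 * bval (Sat TG ψ' i v) + 0 + 1) = bval (Sat TG (.not ψ') i v)
              have hiff : Sat TG (.not ψ') i v ↔ ¬ Sat TG ψ' i v := Iff.rfl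
              by_cases hS : Sat TG ψ' i v <;> simp [bval, hS, hiff, trReLU] <;> norm_num
            | and ψ₁ ψ₂ =>
              have hpos1 : φ.subformulas[q + 1]? = some ψ₁ := by
                have h := subf_at (ψ := ψ₁) hqd [] ψ₂.subformulas
                  (by rw [hLq]; simp [PTLK.subformulas])
                simpa using h
              have hpos2 : φ.subformulas[q + 1 + ψ₁.subformulas.length]? = some ψ₂ := by
                have h := subf_at (ψ := ψ₂) hqd ψ₁.subformulas [] (by rw [hLq]; simp [PTLK.subformulas])
                simpa using h
              unfold formulaRow
              simp only [List.map_cons, List.map_nil, List.sum_cons, List.sum_nil,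
                Rat.cast_one, Rat.cast_zero, Rat.cast_neg]
              erw [hcur v (q + 1) ψ₁ hpos1 (by omega),
                hcur v (q + 1 + ψ₁.subformulas.length) ψ₂ hpos2 (by omega)]
              show trReLU (1 * bval (Sat TG ψ₁ i v) + (1 * bval (Sat TG ψ₂ i v) + 0) + (-1))
                  = bval (Sat TG (.and ψ₁ ψ₂) i v)
              have hiff : Sat TG (.and ψ₁ ψ₂) i v ↔ Sat TG ψ₁ i v ∧ Sat TG ψ₂ i v := Iff.rfl
              by_cases hA : Sat TG ψ₁ i v <;> by_cases hB : Sat TG ψ₂ i v <;>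
                simp [bval, hA, hB, hiff, trReLU] <;> norm_num
            | dia ψ' =>
              have hpos : φ.subformulas[q + 1]? = some ψ' := by
                have h := subf_at (ψ := ψ') hqd [] [] (by rw [hLq]; simp [PTLK.subformulas])
                simpa using h
              have hp1 : q + 1 < φ.subformulas.length := by
                rcases List.getElem?_eq_some_iff.mp hpos with ⟨h, _⟩
                exact h
              unfold formulaRow
              simp only [List.map_cons, List.map_nil, List.sum_cons, List.sum_nil,
                Rat.cast_one, Rat.cast_zero]
              erw [vget_append, if_neg (show ¬ (k + φ.subformulas.length + φ.subformulas.length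
                    + (k + φ.subformulas.length + (q + 1)))
                    < (net k φ).toMPNN.dims (m + 1) from
                (by omega : ¬ (k + φ.subformulas.length + φ.subformulas.length
                    + (k + φ.subformulas.length + (q + 1)))
                    < k + φ.subformulas.length + φ.subformulas.length))]
              rw [show k + φ.subformulas.length + φ.subformulas.length
                    + (k + φ.subformulas.length + (q + 1))
                    - (net k φ).toMPNN.dims (m + 1)
                  = k + φ.subformulas.length + (q + 1) from by
                show k + φ.subformulas.length + φ.subformulas.length
                    + (k + φ.subformulas.length + (q + 1))
                    - (k + φ.subformulas.length + φ.subformulas.length) = _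
                omega]
              erw [vget_eq _ (show k + φ.subformulas.length + (q + 1)
                    < (net k φ).toMPNN.aggDims (m + 1) from
                (by omega : k + φ.subformulas.length + (q + 1)
                    < k + φ.subformulas.length + φ.subformulas.length))]
              erw [sumAgg_map]
              have hsum : ∀ u ∈ Finset.univ.filter fun w => TG.adj i v w = true,
                  (net k φ).toMPNN.emb (TG.adj i) c (m + 1) u
                      ⟨k + φ.subformulas.length + (q + 1), by
                        show _ < k + φ.subformulas.length + φ.subformulas.length; omega⟩
                    = bval (Sat TG ψ' i u) := by
                intro u _
                have hval := ihm u (k + φ.subformulas.length + (q + 1))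
                rw [vget_eq _ (show k + φ.subformulas.length + (q + 1)
                      < (net k φ).toMPNN.dims (m + 1) from
                  (by omega : k + φ.subformulas.length + (q + 1)
                      < k + φ.subformulas.length + φ.subformulas.length))] at hval
                rw [hval, pSpec_cur φ TG m i u hp1,
                  if_pos (show φ.subformulas.length ≤ (q + 1) + m from by omega)]
                exact curS_of_getElem? hpos
              erw [Finset.sum_congr rfl hsum]
              rw [one_mul_add_zero, trReLU_sum_bval]
              have hiff : (∃ u ∈ Finset.univ.filter fun w => TG.adj i v w = true,
                  Sat TG ψ' i u) ↔ Sat TG (.dia ψ') i v := by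
                show _ ↔ ∃ u, TG.adj i v u = true ∧ Sat TG ψ' i u
                simp
              rw [propext hiff]
            | yest ψ' =>
              have hpos : φ.subformulas[q + 1]? = some ψ' := by
                have h := subf_at (ψ := ψ') hqd [] [] (by rw [hLq]; simp [PTLK.subformulas])
                simpa using h
              have hp1 : q + 1 < φ.subformulas.length := by
                rcases List.getElem?_eq_some_iff.mp hpos with ⟨h, _⟩
                exact h
              unfold formulaRow
              simp only [List.map_cons, List.map_nil, List.sum_cons, List.sum_nil,
                Rat.cast_one, Rat.cast_zero]
              erw [hprev v (q + 1) hp1, trReLU_copy (prevS_zo φ TG i v (q + 1))]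
              cases i with
              | zero =>
                have hns : ¬ Sat TG (.yest ψ') 0 v := by
                  rintro ⟨h, -⟩
                  exact absurd h (by omega)
                show (0:ℝ) = bval (Sat TG (.yest ψ') 0 v)
                simp [bval, hns]
              | succ j =>
                have hiff : Sat TG (.yest ψ') (j + 1) v ↔ Sat TG ψ' j v := by
                  show (0 < j + 1 ∧ Sat TG ψ' (j + 1 - 1) v) ↔ _
                  simp
                rw [show prevS φ TG (j + 1) v (q + 1) = curS φ TG j v (q + 1) from rfl,
                  curS_of_getElem? hpos, propext hiff]
            | past ψ' =>
              have hpos : φ.subformulas[q + 1]? = some ψ' := by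
                have h := subf_at (ψ := ψ') hqd [] [] (by rw [hLq]; simp [PTLK.subformulas])
                simpa using h
              have hp1 : q + 1 < φ.subformulas.length := by
                rcases List.getElem?_eq_some_iff.mp hpos with ⟨h, _⟩
                exact h
              unfold formulaRow
              simp only [List.map_cons, List.map_nil, List.sum_cons, List.sum_nil,
                Rat.cast_one, Rat.cast_zero]
              erw [hprev v q hqd, hprev v (q + 1) hp1]
              cases i with
              | zero =>
                have hns : ¬ Sat TG (.past ψ') 0 v := by
                  rintro ⟨j, hj, -⟩
                  exact absurd hj (by omega)
                show trReLU (1 * (0:ℝ) + (1 * 0 + 0) + 0) = bval (Sat TG (.past ψ') 0 v)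
                simp [bval, hns, trReLU]
              | succ j =>
                rw [show prevS φ TG (j + 1) v q = curS φ TG j v q from rfl,
                  show prevS φ TG (j + 1) v (q + 1) = curS φ TG j v (q + 1) from rfl,
                  curS_of_getElem? hpos,
                  curS_of_getElem? (show φ.subformulas[q]? = some (.past ψ') from by
                    rw [List.getElem?_eq_getElem hqd, hLq]),
                  propext (sat_past_succ TG ψ' j v)]
                by_cases hA : Sat TG (.past ψ') j v <;> by_cases hB : Sat TG ψ' j v <;>
                  simp [bval, hA, hB, trReLU] <;> norm_num

lemma vget_zero {m : ℕ} (p : ℕ) : vget (fun _ => (0:ℝ) : Vec m) p = 0 := by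
  unfold vget; split <;> rfl

/-- The state of the constructed TGNN computes the full specification. -/
lemma state_spec (φ : PTLK k) (TG : TemporalGraph V k) :
    ∀ (i : ℕ) (v : V) (n : ℕ),
      vget ((tgnn k φ).state TG i v) n = pSpec φ TG φ.subformulas.length i v n := by
  intro i
  induction i with
  | zero =>
    intro v n
    refine emb_spec φ TG 0 _ ?_ ?_ φ.subformulas.length (le_refl _) v n
    · intro u p hp
      erw [vget_cast]
      rw [vget_append, if_pos (show p < k from hp)]
    · intro u p hp
      erw [vget_cast]
      rw [vget_append,
        if_neg (show ¬ k + (k + φ.subformulas.length) + p < k from by omega),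
        show k + (k + φ.subformulas.length) + p - k = k + φ.subformulas.length + p
          from by omega]
      rw [vget_zero]
      rfl
  | succ i ih =>
    intro v n
    refine emb_spec φ TG (i + 1) _ ?_ ?_ φ.subformulas.length (le_refl _) v n
    · intro u p hp
      erw [vget_cast]
      rw [vget_append, if_pos (show p < k from hp)]
    · intro u p hp
      erw [vget_cast]
      rw [vget_append,
        if_neg (show ¬ k + (k + φ.subformulas.length) + p < k from by omega),
        show k + (k + φ.subformulas.length) + p - k = k + φ.subformulas.length + p
          from by omega]
      rw [ih u (k + φ.subformulas.length + p), pSpec_cur φ TG φ.subformulas.length i u hp,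
        if_pos (show φ.subformulas.length ≤ p + φ.subformulas.length from by omega)]
      rfl

/-- The output of the constructed TGNN is the truth value of `φ`. -/
lemma output_spec (φ : PTLK k) (TG : TemporalGraph V k) (v : V) :
    (tgnn k φ).output TG v = bval (Sat TG φ (TG.len - 1) v) := by
  have h0 : vget ((tgnn k φ).state TG (TG.len - 1) v) (k + φ.subformulas.length)
      = bval (Sat TG φ (TG.len - 1) v) := by
    have h := state_spec φ TG (TG.len - 1) v (k + φ.subformulas.length + 0)
    rw [pSpec_cur φ TG φ.subformulas.length (TG.len - 1) v φ.subformulas_length_pos,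
      if_pos (show φ.subformulas.length ≤ 0 + φ.subformulas.length from by omega),
      curS_of_getElem? (show φ.subformulas[0]? = some φ from by
        rw [List.getElem?_eq_getElem φ.subformulas_length_pos]
        exact congrArg some (φ.subformulas_getElem_zero _))] at h
    simpa using h
  show (mkLayerN (k + φ.subformulas.length + φ.subformulas.length) 1
      (fun _ => ([(k + φ.subformulas.length, 1)], 0))).eval
        ((tgnn k φ).state TG (TG.len - 1) v) (0 : Fin 1) = _
  erw [mkLayerN_eval]
  simp only [List.map_cons, List.map_nil, List.sum_cons, List.sum_nil,
    Rat.cast_one, Rat.cast_zero]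
  erw [show vget ((tgnn k φ).state TG (TG.len - 1) v) (k + φ.subformulas.length)
      = bval (Sat TG φ (TG.len - 1) v) from h0]
  exact trReLU_copy (bval_zero_or_one _)

end Core

/-- Theorem 1, `PTL_{P,Y}×K ≤ T_rec[M̂]`: every formula of the product
logic `PTL_{P,Y}×K` is captured by some recursive TGNN over `M̂`. -/
theorem PTLK_le_TrecMhat : ∀ (k : ℕ) (φ : PTLK k), ∃ T : RecTGNN k, T.captures φ := by
  intro k φ
  refine ⟨tgnn k φ, ?_⟩
  intro V _ _ TG v
  rw [output_spec φ TG v]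
  constructor
  · intro h
    simp [bval, h]
  · intro h
    by_contra hS
    rw [show bval (Sat TG φ (TG.len - 1) v) = 0 from by simp [bval, hS]] at h
    norm_num at h
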